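/- Let r ≥ 1 be an integer and let p be a univariate real polynomial of degree at most r such that p(t) ≥ 0 for all t ≥ 0, p(0) = 1, and p(t) ≤ 1 for all t ∈ [0, 1]. Then p(t) ≥ 1 − 2r²t for all t ∈ [0, 1/(2r²)] (and hence p(t) ≥ Λ_r(t) for all t ≥ 0, where Λ_r(t) = max(1 − 2r²t, 0)). -/

import Mathlib

open Polynomial Real Finset
set_option maxHeartbeats 1000000
open Polynomial Real

lemma abs_sin_nat_mul_le (n : ℕ) (x : ℝ) : |Real.sin (n * x)| ≤ n * |Real.sin x| := by
  induction n with
  | zero => simp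
  | succ n ih =>
    have : ((n+1 : ℕ) : ℝ) * x = n * x + x := by push_cast; ring
    rw [this, Real.sin_add]
    calc |Real.sin (n*x) * Real.cos x + Real.cos (n*x) * Real.sin x|
        ≤ |Real.sin (n*x) * Real.cos x| + |Real.cos (n*x) * Real.sin x| := abs_add_le _ _
      _ ≤ |Real.sin (n*x)| * 1 + 1 * |Real.sin x| := by
          rw [abs_mul, abs_mul]
          gcongr <;> first | exact Real.abs_cos_le_one _ | exact abs_nonneg _
      _ ≤ n * |Real.sin x| + 1 * |Real.sin x| := by rw [mul_one]; gcongr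
      _ = ((n+1 : ℕ) : ℝ) * |Real.sin x| := by push_cast; ring

lemma one_sub_cos_nat_mul_le (n : ℕ) (x : ℝ) :
    1 - Real.cos (n * x) ≤ (n : ℝ)^2 * (1 - Real.cos x) := by
  have h1 : Real.sin ((n*x)/2) ^ 2 = 1/2 - Real.cos (n*x) / 2 := by
    have := Real.sin_sq_eq_half_sub ((n*x)/2)
    rwa [mul_div_cancel₀ _ (two_ne_zero)] at this
  have h2 : Real.sin (x/2) ^ 2 = 1/2 - Real.cos x / 2 := by
    have := Real.sin_sq_eq_half_sub (x/2)
    rwa [mul_div_cancel₀ _ (two_ne_zero)] at this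
  have h3 : |Real.sin ((n*x)/2)| ≤ n * |Real.sin (x/2)| := by
    have := abs_sin_nat_mul_le n (x/2)
    rwa [show (n : ℝ) * (x/2) = (n*x)/2 by ring] at this
  have h4 : Real.sin ((n*x)/2)^2 ≤ (n:ℝ)^2 * Real.sin (x/2)^2 := by
    have := mul_self_le_mul_self (abs_nonneg _) h3
    calc Real.sin ((n*x)/2)^2 = |Real.sin ((n*x)/2)| * |Real.sin ((n*x)/2)| := by
          rw [← abs_mul, abs_mul_self]; ring
      _ ≤ (n * |Real.sin (x/2)|) * (n * |Real.sin (x/2)|) := this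
      _ = (n:ℝ)^2 * Real.sin (x/2)^2 := by
          rw [show ((n:ℝ) * |Real.sin (x/2)|) * ((n:ℝ) * |Real.sin (x/2)|)
              = (n:ℝ)^2 * (|Real.sin (x/2)| * |Real.sin (x/2)|) by ring, ← abs_mul, abs_mul_self]
          ring
  rw [h1, h2] at h4
  linarith

lemma natDegree_T_le : ∀ n : ℕ, (Polynomial.Chebyshev.T ℝ (n : ℤ)).natDegree ≤ n
  | 0 => by simp [Polynomial.Chebyshev.T_zero]
  | 1 => by simp [Polynomial.Chebyshev.T_one]
  | (n+2) => by
    have h1 := natDegree_T_le n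
    have h2 := natDegree_T_le (n+1)
    have h3 : ((n : ℤ) + 2) = ((n + 2 : ℕ) : ℤ) := by push_cast; ring
    have h4 := Polynomial.Chebyshev.T_add_two ℝ (n : ℤ)
    rw [h3] at h4
    rw [h4]
    refine le_trans (Polynomial.natDegree_sub_le _ _) ?_
    rw [max_le_iff]
    constructor
    · refine le_trans (Polynomial.natDegree_mul_le) ?_
      have : ((n:ℤ)+1) = ((n+1 : ℕ) : ℤ) := by push_cast; ring
      rw [this]
      have : (2 * X : ℝ[X]).natDegree ≤ 1 := by
        refine le_trans (Polynomial.natDegree_mul_le) ?_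
        simp
      omega
    · omega

lemma key_lemma (r : ℕ) (hr : 1 ≤ r) (q : ℝ[X]) (hdeg : q.natDegree ≤ r)
    (hq0 : q.eval 0 = 0)
    (hql : ∀ t ∈ Set.Icc (0:ℝ) 1, 0 ≤ q.eval t)
    (hqu : ∀ t ∈ Set.Icc (0:ℝ) 1, q.eval t ≤ 1) :
    ∀ t ∈ Set.Icc (0:ℝ) (1/(2*(r:ℝ)^2)), q.eval t ≤ 2*(r:ℝ)^2 * t := by
  intro t ht
  have hR1 : (1:ℝ) ≤ (r:ℝ) := by exact_mod_cast hr
  have hR0 : (0:ℝ) < (r:ℝ) := by linarith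
  have hπ : (0:ℝ) < π := Real.pi_pos
  rcases eq_or_lt_of_le ht.1 with h0 | h0
  · rw [← h0, hq0]; simp
  -- the nodes
  set v : ℕ → ℝ := fun k => (1 - Real.cos (k * π / r))/2 with hv
  set s : Finset ℕ := Finset.range (r+1) with hs
  have hangle : ∀ k : ℕ, k ≤ r → (0:ℝ) ≤ k * π / r ∧ (k:ℝ) * π / r ≤ π := by
    intro k hk
    refine ⟨by positivity, ?_⟩
    rw [div_le_iff₀ hR0]
    have : (k:ℝ) ≤ r := by exact_mod_cast hk
    nlinarith
  have hvmono : ∀ k l : ℕ, l ≤ r → k < l → v k < v l := by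
    intro k l hl hkl
    have h1 : (k:ℝ) * π / r < l * π / r := by
      have hk' : (k:ℝ) < l := by exact_mod_cast hkl
      gcongr
    have h2 := Real.cos_lt_cos_of_nonneg_of_le_pi (hangle k (by omega)).1 (hangle l hl).2 h1
    show (1 - Real.cos (k * π / r))/2 < (1 - Real.cos (l * π / r))/2
    linarith
  have hinj : Set.InjOn v ↑s := by
    intro a ha b hb hab
    simp only [hs, Finset.coe_range, Set.mem_Iio] at ha hb
    rcases lt_trichotomy a b with h | h | h
    · exact absurd hab (ne_of_lt (hvmono a b (by omega) h))
    · exact h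
    · exact absurd hab.symm (ne_of_lt (hvmono b a (by omega) h))
  have hv0 : v 0 = 0 := by simp [hv]
  have hvmem : ∀ k : ℕ, v k ∈ Set.Icc (0:ℝ) 1 := by
    intro k
    have h1 := Real.neg_one_le_cos (k * π / r)
    have h2 := Real.cos_le_one ((k:ℝ) * π / r)
    constructor
    · show 0 ≤ (1 - Real.cos (k * π / r))/2; linarith
    · show (1 - Real.cos (k * π / r))/2 ≤ 1; linarith
  -- t < v 1
  have hv1 : 1/(2*(r:ℝ)^2) < v 1 := by
    have hsin : 1/(r:ℝ) ≤ Real.sin (π/(2*r)) := by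
      have h1 : (0:ℝ) ≤ π/(2*r) := by positivity
      have h2 : π/(2*r) ≤ π/2 := by
        rw [div_le_div_iff₀ (by positivity) (by norm_num)]
        nlinarith
      have := Real.mul_le_sin h1 h2
      have heq : 2/π * (π/(2*r)) = 1/(r:ℝ) := by field_simp
      linarith [heq ▸ this]
    have hsq : Real.sin (π/(2*r))^2 = 1/2 - Real.cos (π/r)/2 := by
      have := Real.sin_sq_eq_half_sub (π/(2*r))
      rw [show 2*(π/(2*(r:ℝ))) = π/r by field_simp] at this
      exact this
    have h3 : (1/(r:ℝ))^2 ≤ Real.sin (π/(2*r))^2 := by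
      apply pow_le_pow_left₀ (by positivity) hsin
    have hv1e : v 1 = (1 - Real.cos (π / r))/2 := by
      show (1 - Real.cos ((1:ℕ) * π / r))/2 = _
      norm_num
    rw [hv1e]
    have h4 : (1/(r:ℝ))^2 = 1/(r:ℝ)^2 := by field_simp
    rw [h4] at h3
    rw [hsq] at h3
    have h5 : 1/(2*(r:ℝ)^2) < 1/(r:ℝ)^2 := by
      rw [div_lt_div_iff₀ (by positivity) (by positivity)]
      nlinarith
    linarith
  have htv1 : t < v 1 := lt_of_le_of_lt ht.2 hv1
  have ht01 : t ∈ Set.Icc (0:ℝ) 1 := by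
    refine ⟨ht.1, ?_⟩
    have : 1/(2*(r:ℝ)^2) ≤ 1 := by
      rw [div_le_one (by positivity)]; nlinarith
    linarith [ht.2]
  -- the comparison polynomial
  set QP : ℝ[X] := Polynomial.C (2⁻¹:ℝ) * (1 - (Polynomial.Chebyshev.T ℝ (r:ℤ)).comp
      (1 - Polynomial.C 2 * Polynomial.X)) with hQP
  have hQPdeg : QP.natDegree ≤ r := by
    refine le_trans (natDegree_C_mul_le _ _) ?_
    refine le_trans (natDegree_sub_le _ _) ?_
    rw [max_le_iff]
    refine ⟨by simp, ?_⟩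
    refine le_trans (natDegree_comp_le) ?_
    have h1 : ((1:ℝ[X]) - Polynomial.C 2 * Polynomial.X).natDegree ≤ 1 := by
      refine le_trans (natDegree_sub_le _ _) ?_
      rw [max_le_iff]
      exact ⟨by simp, le_trans (natDegree_C_mul_le _ _) (by simp)⟩
    calc (Polynomial.Chebyshev.T ℝ (r:ℤ)).natDegree *
          ((1:ℝ[X]) - Polynomial.C 2 * Polynomial.X).natDegree
        ≤ r * 1 := Nat.mul_le_mul (natDegree_T_le r) h1
      _ = r := by omega
  have hQPT : ∀ x : ℝ, QP.eval x = 2⁻¹ * (1 - (Polynomial.Chebyshev.T ℝ (r:ℤ)).eval (1 - 2*x)) := by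
    intro x
    simp only [hQP, eval_mul, eval_C, eval_sub, eval_one, eval_comp, eval_mul, eval_X]
  have hQPnode : ∀ k : ℕ, k ≤ r → QP.eval (v k) = (1 - (-1:ℝ)^k)/2 := by
    intro k hk
    rw [hQPT]
    have h1 : 1 - 2 * v k = Real.cos (k * π / r) := by
      show 1 - 2 * ((1 - Real.cos (k * π / r))/2) = _
      ring
    rw [h1, Polynomial.Chebyshev.T_real_cos]
    have h2 : ((r:ℤ):ℝ) * ((k:ℝ) * π / r) = k * π := by
      push_cast
      field_simp
    rw [h2]
    have h3 : Real.cos ((k:ℝ) * π) = (-1:ℝ)^k := by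
      have := Real.cos_nat_mul_pi_sub 0 k
      simpa using this
    rw [h3]
    ring
  have hQPt : QP.eval t = (1 - Real.cos (r * Real.arccos (1 - 2*t)))/2 := by
    rw [hQPT]
    have h1 : (1:ℝ) - 2*t = Real.cos (Real.arccos (1-2*t)) := by
      rw [Real.cos_arccos (by linarith [ht01.2]) (by linarith [ht01.1])]
    have h2 : (Polynomial.Chebyshev.T ℝ (r:ℤ)).eval (1-2*t)
        = Real.cos (r * Real.arccos (1-2*t)) := by
      conv_lhs => rw [h1]
      rw [Polynomial.Chebyshev.T_real_cos]
      push_cast; ring_nf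
    rw [h2]; ring
  -- interpolation
  have hcard : s.card = r + 1 := Finset.card_range _
  have hdegq : q.degree < (s.card : ℕ) := by
    rw [hcard]
    refine lt_of_le_of_lt (Polynomial.degree_le_natDegree) ?_
    exact_mod_cast Nat.lt_succ_of_le hdeg
  have hdegQP : QP.degree < (s.card : ℕ) := by
    rw [hcard]
    refine lt_of_le_of_lt (Polynomial.degree_le_natDegree) ?_
    exact_mod_cast Nat.lt_succ_of_le hQPdeg
  have hq_interp := Lagrange.eq_interpolate hinj hdegq
  have hQP_interp := Lagrange.eq_interpolate hinj hdegQP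
  have hqeval : q.eval t = ∑ k ∈ s, q.eval (v k) * (Lagrange.basis s v k).eval t := by
    conv_lhs => rw [hq_interp]
    rw [Lagrange.interpolate_apply, Polynomial.eval_finset_sum]
    exact Finset.sum_congr rfl (fun k _ => by rw [eval_mul, eval_C])
  have hQPeval2 : QP.eval t = ∑ k ∈ s, QP.eval (v k) * (Lagrange.basis s v k).eval t := by
    conv_lhs => rw [hQP_interp]
    rw [Lagrange.interpolate_apply, Polynomial.eval_finset_sum]
    exact Finset.sum_congr rfl (fun k _ => by rw [eval_mul, eval_C])
  -- the sign argument
  have hmain : q.eval t - QP.eval t ≤ 0 := by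
    rw [hqeval, hQPeval2, ← Finset.sum_sub_distrib]
    apply Finset.sum_nonpos
    intro k hk
    rw [← sub_mul]
    have hkr : k ≤ r := by
      rw [hs, Finset.mem_range] at hk; omega
    rcases Nat.eq_zero_or_pos k with hk0 | hk1
    · subst hk0
      have hz : QP.eval (v 0) = 0 := by
        rw [hQPnode 0 (by omega)]; norm_num
      rw [hv0] at hz
      rw [hv0, hq0, hz]
      norm_num
    -- basis sign for k ≥ 1
    have hv1le : ∀ j : ℕ, 1 ≤ j → j ≤ r → v 1 ≤ v j := by
      intro j hj1 hjr
      rcases eq_or_lt_of_le hj1 with h | h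
      · rw [← h]
      · exact le_of_lt (hvmono 1 j hjr h)
    have hBrepr : (Lagrange.basis s v k).eval t
        = ∏ j ∈ s.erase k, ((v k - v j)⁻¹ * (t - v j)) := by
      rw [Lagrange.basis, Polynomial.eval_prod]
      exact Finset.prod_congr rfl (fun j _ => by
        simp [Lagrange.basisDivisor])
    have hfilt : (s.erase k).filter (fun j => 1 ≤ j ∧ j < k) = Finset.Ico 1 k := by
      ext j
      simp only [Finset.mem_filter, Finset.mem_erase, hs, Finset.mem_range, Finset.mem_Ico]
      omega
    have hsplit := Finset.prod_filter_mul_prod_filter_not (s.erase k)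
      (fun j => 1 ≤ j ∧ j < k) (fun j => (v k - v j)⁻¹ * (t - v j))
    have hneg : ∀ j ∈ Finset.Ico 1 k, (v k - v j)⁻¹ * (t - v j) < 0 := by
      intro j hj
      rw [Finset.mem_Ico] at hj
      have h1 : v j < v k := hvmono j k hkr hj.2
      have h2 : t - v j < 0 := by
        have := hv1le j hj.1 (by omega)
        linarith
      exact mul_neg_of_pos_of_neg (by rw [inv_pos]; linarith) h2
    have hposneg : 0 < ∏ j ∈ Finset.Ico 1 k, (-((v k - v j)⁻¹ * (t - v j))) := by
      apply Finset.prod_pos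
      intro j hj
      linarith [hneg j hj]
    have hico : ∏ j ∈ Finset.Ico 1 k, ((v k - v j)⁻¹ * (t - v j))
        = (-1:ℝ)^(k-1) * ∏ j ∈ Finset.Ico 1 k, (-((v k - v j)⁻¹ * (t - v j))) := by
      calc ∏ j ∈ Finset.Ico 1 k, ((v k - v j)⁻¹ * (t - v j))
          = ∏ j ∈ Finset.Ico 1 k, ((-1) * (-((v k - v j)⁻¹ * (t - v j)))) :=
            Finset.prod_congr rfl (fun j _ => by ring)
        _ = (∏ _j ∈ Finset.Ico 1 k, (-1:ℝ)) * ∏ j ∈ Finset.Ico 1 k,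
              (-((v k - v j)⁻¹ * (t - v j))) := Finset.prod_mul_distrib
        _ = (-1:ℝ)^(k-1) * ∏ j ∈ Finset.Ico 1 k, (-((v k - v j)⁻¹ * (t - v j))) := by
            rw [Finset.prod_const, Nat.card_Ico]
    have hpos2 : 0 < ∏ j ∈ (s.erase k).filter (fun j => ¬(1 ≤ j ∧ j < k)),
        ((v k - v j)⁻¹ * (t - v j)) := by
      apply Finset.prod_pos
      intro j hj
      simp only [Finset.mem_filter, Finset.mem_erase, hs, Finset.mem_range] at hj
      have hjr : j ≤ r := by omega
      rcases (by omega : j = 0 ∨ k < j) with h | h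
      · subst h
        rw [hv0]
        have hvk : 0 < v k := by rw [← hv0]; exact hvmono 0 k hkr hk1
        have h1 : 0 < (v k - 0)⁻¹ := by rw [inv_pos]; linarith
        have h2 : 0 < t - 0 := by linarith
        exact mul_pos h1 h2
      · have h1 : v k < v j := hvmono k j hjr h
        have h2 : t - v j < 0 := by
          have := hv1le j (by omega) hjr
          linarith
        exact mul_pos_of_neg_of_neg (by rw [inv_lt_zero]; linarith)  h2
    have hBsign : (Lagrange.basis s v k).eval t
        = (-1:ℝ)^(k-1) * ((∏ j ∈ Finset.Ico 1 k, (-((v k - v j)⁻¹ * (t - v j))))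
          * ∏ j ∈ (s.erase k).filter (fun j => ¬(1 ≤ j ∧ j < k)),
            ((v k - v j)⁻¹ * (t - v j))) := by
      rw [hBrepr, ← hsplit, hfilt, hico]
      ring
    set P : ℝ := (∏ j ∈ Finset.Ico 1 k, (-((v k - v j)⁻¹ * (t - v j))))
          * ∏ j ∈ (s.erase k).filter (fun j => ¬(1 ≤ j ∧ j < k)),
            ((v k - v j)⁻¹ * (t - v j)) with hP
    have hPpos : 0 < P := mul_pos hposneg hpos2
    rcases Nat.even_or_odd k with hpar | hpar
    · -- k even, k ≥ 2 : basis ≤ 0, coefficient ≥ 0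
      have hk2 : 2 ≤ k := by
        rcases hpar with ⟨m, hm⟩; omega
      have hodd : Odd (k-1) := Nat.Even.sub_odd (by omega) hpar odd_one
      have hB : (Lagrange.basis s v k).eval t ≤ 0 := by
        rw [hBsign, hodd.neg_one_pow]
        linarith
      have hcoef : 0 ≤ q.eval (v k) - QP.eval (v k) := by
        rw [hQPnode k hkr, hpar.neg_one_pow]
        have := hql (v k) (hvmem k)
        norm_num
        linarith
      exact mul_nonpos_of_nonneg_of_nonpos hcoef hB
    · -- k odd : basis ≥ 0, coefficient ≤ 0
      have heven : Even (k-1) := Nat.Odd.sub_odd hpar odd_one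
      have hB : 0 ≤ (Lagrange.basis s v k).eval t := by
        rw [hBsign, heven.neg_one_pow]
        linarith
      have hcoef : q.eval (v k) - QP.eval (v k) ≤ 0 := by
        rw [hQPnode k hkr, hpar.neg_one_pow]
        have := hqu (v k) (hvmem k)
        norm_num
        linarith
      exact mul_nonpos_of_nonpos_of_nonneg hcoef hB
  -- conclude
  have hfin : QP.eval t ≤ (r:ℝ)^2 * t := by
    rw [hQPt]
    have h1 := one_sub_cos_nat_mul_le r (Real.arccos (1 - 2*t))
    rw [Real.cos_arccos (by linarith [ht01.2]) (by linarith [ht01.1])] at h1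
    linarith
  have : (r:ℝ)^2 * t ≤ 2*(r:ℝ)^2 * t := by nlinarith
  linarith

/-- Lemma: let `r ≥ 1` and let `p` be a univariate real polynomial of degree at most
`r` with `p ≥ 0` on `[0,∞)`, `p(0) = 1`, and `p ≤ 1` on `[0,1]`. Then
`p(t) ≥ 1 - 2r²t` for all `t ∈ [0, 1/(2r²)]`, and hence `p(t) ≥ max(1 - 2r²t, 0)`
for all `t ≥ 0`. -/
theorem stmt19 (r : ℕ) (hr : 1 ≤ r) (p : Polynomial ℝ)
    (hdeg : p.natDegree ≤ r)
    (hpos : ∀ t : ℝ, 0 ≤ t → 0 ≤ p.eval t)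
    (h0 : p.eval 0 = 1)
    (h1 : ∀ t ∈ Set.Icc (0 : ℝ) 1, p.eval t ≤ 1) :
    (∀ t ∈ Set.Icc (0 : ℝ) (1 / (2 * (r : ℝ) ^ 2)), 1 - 2 * (r : ℝ) ^ 2 * t ≤ p.eval t) ∧
    (∀ t : ℝ, 0 ≤ t → max (1 - 2 * (r : ℝ) ^ 2 * t) 0 ≤ p.eval t) := by
  have hR1 : (1:ℝ) ≤ (r:ℝ) := by exact_mod_cast hr
  set q : ℝ[X] := 1 - p with hq
  have hqe : ∀ x : ℝ, q.eval x = 1 - p.eval x := by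
    intro x; simp [hq]
  have hqdeg : q.natDegree ≤ r := by
    refine le_trans (natDegree_sub_le _ _) ?_
    exact max_le (by simp) hdeg
  have hkey := key_lemma r hr q hqdeg (by rw [hqe, h0]; ring)
    (fun x hx => by rw [hqe]; linarith [h1 x hx])
    (fun x hx => by rw [hqe]; linarith [hpos x hx.1])
  have part1 : ∀ t ∈ Set.Icc (0 : ℝ) (1 / (2 * (r : ℝ) ^ 2)),
      1 - 2 * (r : ℝ) ^ 2 * t ≤ p.eval t := by
    intro t htmem
    have := hkey t htmem
    rw [hqe] at this
    linarith
  refine ⟨part1, ?_⟩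
  intro t htge
  rcases le_or_gt t (1 / (2 * (r : ℝ) ^ 2)) with hc | hc
  · exact max_le (part1 t ⟨htge, hc⟩) (hpos t htge)
  · have hr2 : (0:ℝ) < 2 * (r:ℝ)^2 := by positivity
    have : 1 - 2 * (r : ℝ) ^ 2 * t < 0 := by
      rw [div_lt_iff₀ hr2] at hc
      nlinarith
    exact max_le (by linarith [hpos t htge]) (hpos t htge)
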